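/- If θ_1,...,θ_n ∈ k_∞ and at least one θ_i is not in k = F_q(T), then there exist infinitely many polynomials x ∈ K such that |x|^{1/n} · max_{1≤i≤n} ‖xθ_i‖ ≤ 1/q. -/

import Mathlib

set_option linter.unusedSectionVars false

open FunctionField Multiplicative WithZero

variable (Fq : Type) [Field Fq] [Fintype Fq] [DecidableEq (RatFunc Fq)]

/-- The embedding of the rational function field into its completion at infinity. -/
noncomputable def embR : RatFunc Fq →+* RatFunc.CompletionAtInfty Fq :=
  letI := RatFunc.inftyValued Fq
  UniformSpace.Completion.coeRingHom

/-- The embedding of the polynomial ring `K = Fq[T]` into `k∞`. -/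
noncomputable def embP : Polynomial Fq →+* RatFunc.CompletionAtInfty Fq :=
  (embR Fq).comp (algebraMap (Polynomial Fq) (RatFunc Fq))

/-- The absolute value `|α| = q^{-v(α)}` on `k∞`. -/
noncomputable def vabs (α : RatFunc.CompletionAtInfty Fq) : ℝ :=
  if h : Valued.v α = (0 : WithZero (Multiplicative ℤ)) then 0
  else (Fintype.card Fq : ℝ) ^ (toAdd (unzero h))

/-- The distance `‖α‖` from `α` to the nearest polynomial. -/
noncomputable def pnorm (α : RatFunc.CompletionAtInfty Fq) : ℝ :=
  ⨅ A : Polynomial Fq, vabs Fq (α - embP Fq A)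

lemma one_lt_q : (1 : ℝ) < (Fintype.card Fq : ℝ) := by
  exact_mod_cast Fintype.one_lt_card

lemma v_embR (f : RatFunc Fq) : Valued.v (embR Fq f) = RatFunc.inftyValuationDef Fq f := by
  letI := RatFunc.inftyValued Fq
  rw [← RatFunc.inftyValued.def]
  exact Valued.valuedCompletion_apply f

lemma vabs_nonneg (α : RatFunc.CompletionAtInfty Fq) : 0 ≤ vabs Fq α := by
  unfold vabs
  split
  · exact le_refl 0
  · exact zpow_nonneg (by positivity) _

lemma vabs_le_of_le {α : RatFunc.CompletionAtInfty Fq} {z : ℤ}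
    (h : Valued.v α ≤ ((ofAdd z : Multiplicative ℤ) : ℤᵐ⁰)) :
    vabs Fq α ≤ (Fintype.card Fq : ℝ) ^ z := by
  unfold vabs
  split
  · exact zpow_nonneg (by positivity) _
  · rename_i h0
    apply zpow_le_zpow_right₀ (one_lt_q Fq).le
    have h' : ((unzero h0 : Multiplicative ℤ) : ℤᵐ⁰) ≤ ((ofAdd z : Multiplicative ℤ) : ℤᵐ⁰) := by
      rw [WithZero.coe_unzero h0]; exact h
    have := WithZero.coe_le_coe.1 h'
    exact Multiplicative.toAdd_le.2 this

lemma vabs_mono {α β : RatFunc.CompletionAtInfty Fq} (h : Valued.v α ≤ Valued.v β) :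
    vabs Fq α ≤ vabs Fq β := by
  by_cases h1 : Valued.v α = 0
  · unfold vabs; rw [dif_pos h1]; exact vabs_nonneg Fq β
  · have h2 : Valued.v β ≠ 0 := fun hb => h1 (le_antisymm (hb ▸ h) zero_le')
    unfold vabs; rw [dif_neg h1, dif_neg h2]
    apply zpow_le_zpow_right₀ (one_lt_q Fq).le
    apply Multiplicative.toAdd_le.2
    apply WithZero.coe_le_coe.1
    rw [WithZero.coe_unzero h1, WithZero.coe_unzero h2]
    exact h

lemma vabs_pos {α : RatFunc.CompletionAtInfty Fq} (h : α ≠ 0) : 0 < vabs Fq α := by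
  have h0 : Valued.v α ≠ 0 := by
    simpa using (Valuation.zero_iff Valued.v).not.2 h
  unfold vabs; rw [dif_neg h0]
  exact zpow_pos (by positivity) _

lemma pnorm_bdd (α : RatFunc.CompletionAtInfty Fq) :
    BddBelow (Set.range fun A : Polynomial Fq => vabs Fq (α - embP Fq A)) := by
  refine ⟨0, ?_⟩
  rintro r ⟨A, rfl⟩
  exact vabs_nonneg Fq _

lemma pnorm_le (α : RatFunc.CompletionAtInfty Fq) (A : Polynomial Fq) :
    pnorm Fq α ≤ vabs Fq (α - embP Fq A) :=
  ciInf_le (pnorm_bdd Fq α) A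

lemma pnorm_nonneg (α : RatFunc.CompletionAtInfty Fq) : 0 ≤ pnorm Fq α :=
  Real.iInf_nonneg fun _ => vabs_nonneg Fq _

lemma le_of_lt_succ {x : ℤᵐ⁰} {z : ℤ}
    (h : x < ((ofAdd (z + 1) : Multiplicative ℤ) : ℤᵐ⁰)) :
    x ≤ ((ofAdd z : Multiplicative ℤ) : ℤᵐ⁰) := by
  rcases eq_or_ne x 0 with rfl | hx
  · exact zero_le'
  · rw [← WithZero.coe_unzero hx] at h ⊢
    rw [WithZero.coe_lt_coe] at h
    rw [WithZero.coe_le_coe]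
    have h' : (unzero hx).toAdd < z + 1 := by
      have := Multiplicative.toAdd_lt.2 h
      simpa using this
    have h'' : (unzero hx).toAdd ≤ z := Int.lt_add_one_iff.1 h'
    exact Multiplicative.toAdd_le.1 (by simpa using h'')

lemma exists_close (α : RatFunc.CompletionAtInfty Fq) (z : ℤ) :
    ∃ f : RatFunc Fq,
      Valued.v (α - embR Fq f) ≤ ((ofAdd z : Multiplicative ℤ) : ℤᵐ⁰) := by
  letI := RatFunc.inftyValued Fq
  set γ : (ℤᵐ⁰)ˣ := Units.mk0 ((ofAdd (z + 1) : Multiplicative ℤ) : ℤᵐ⁰) WithZero.coe_ne_zero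
    with hγ
  have hc : Valued.v (embR Fq (RatFunc.X ^ (z + 1))) = ((ofAdd (z + 1) : Multiplicative ℤ) : ℤᵐ⁰) := by
    rw [v_embR, ← RatFunc.inftyValuation_apply, RatFunc.inftyValuation.X_zpow]; rfl
  have hU : {y : RatFunc.CompletionAtInfty Fq | Valued.v (y - α) < (γ : ℤᵐ⁰)} ∈ nhds α := by
    rw [Valued.mem_nhds]
    refine ⟨Units.mk0 (Valuation.restrict Valued.v (embR Fq (RatFunc.X ^ (z + 1))))
      ((Valuation.restrict_pos_iff _ _).2 (by rw [hc]; exact WithZero.zero_lt_coe _)).ne', ?_⟩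
    intro y hy
    have hy' : Valuation.restrict Valued.v (y - α) <
        Valuation.restrict Valued.v (embR Fq (RatFunc.X ^ (z + 1))) := hy
    rw [Valuation.restrict_lt_iff, hc] at hy'
    exact hy'
  have hdense := UniformSpace.Completion.denseRange_coe (α := RatFunc Fq)
  have hα := hdense (α : UniformSpace.Completion (RatFunc Fq))
  obtain ⟨y, hyU, hyr⟩ := mem_closure_iff_nhds.1 hα _ hU
  obtain ⟨f, rfl⟩ := hyr
  refine ⟨f, ?_⟩
  have h1 : Valued.v (α - embR Fq f) < (γ : ℤᵐ⁰) := by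
    rw [Valuation.map_sub_swap]
    exact hyU
  exact le_of_lt_succ h1

lemma intDegree_div {p q : Polynomial Fq} (hp : p ≠ 0) (hq : q ≠ 0) :
    (algebraMap (Polynomial Fq) (RatFunc Fq) p /
      algebraMap (Polynomial Fq) (RatFunc Fq) q).intDegree =
      (p.natDegree : ℤ) - q.natDegree := by
  have hp' : algebraMap (Polynomial Fq) (RatFunc Fq) p ≠ 0 := RatFunc.algebraMap_ne_zero hp
  have hq' : algebraMap (Polynomial Fq) (RatFunc Fq) q ≠ 0 := RatFunc.algebraMap_ne_zero hq
  have hinv : (algebraMap (Polynomial Fq) (RatFunc Fq) q)⁻¹.intDegree = -(q.natDegree : ℤ) := by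
    have h := RatFunc.intDegree_mul hq' (inv_ne_zero hq')
    rw [mul_inv_cancel₀ hq', RatFunc.intDegree_one, RatFunc.intDegree_polynomial] at h
    linarith
  rw [div_eq_mul_inv, RatFunc.intDegree_mul hp' (inv_ne_zero hq'),
    RatFunc.intDegree_polynomial, hinv]
  ring

lemma exists_polyPart (f : RatFunc Fq) :
    ∃ P : Polynomial Fq,
      RatFunc.inftyValuationDef Fq (f - algebraMap (Polynomial Fq) (RatFunc Fq) P) ≤
        ((ofAdd (-1 : ℤ) : Multiplicative ℤ) : ℤᵐ⁰) := by
  refine ⟨f.num /ₘ f.denom, ?_⟩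
  have hd : algebraMap (Polynomial Fq) (RatFunc Fq) f.denom ≠ 0 :=
    RatFunc.algebraMap_ne_zero f.denom_ne_zero
  have key : f - algebraMap (Polynomial Fq) (RatFunc Fq) (f.num /ₘ f.denom) =
      algebraMap (Polynomial Fq) (RatFunc Fq) (f.num %ₘ f.denom) /
        algebraMap (Polynomial Fq) (RatFunc Fq) f.denom := by
    have hmod : algebraMap (Polynomial Fq) (RatFunc Fq) (f.num %ₘ f.denom) =
        algebraMap (Polynomial Fq) (RatFunc Fq) f.num -
          algebraMap (Polynomial Fq) (RatFunc Fq) f.denom *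
            algebraMap (Polynomial Fq) (RatFunc Fq) (f.num /ₘ f.denom) := by
      rw [← map_mul, ← map_sub]
      congr 1
      have h := Polynomial.modByMonic_add_div f.num f.denom
      linear_combination h
    rw [hmod, sub_div, RatFunc.num_div_denom]
    congr 1
    rw [mul_comm, mul_div_assoc, div_self hd, mul_one]
  rcases eq_or_ne (f.num %ₘ f.denom) 0 with h0 | h0
  · rw [key, h0, map_zero, zero_div, RatFunc.inftyValuationDef, if_pos rfl]
    exact zero_le'
  · have hne : f - algebraMap (Polynomial Fq) (RatFunc Fq) (f.num /ₘ f.denom) ≠ 0 := by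
      rw [key]
      exact div_ne_zero (RatFunc.algebraMap_ne_zero h0) hd
    rw [RatFunc.inftyValuationDef, if_neg hne, WithZero.exp_eq_coe_ofAdd, WithZero.coe_le_coe, Multiplicative.ofAdd_le, key,
      intDegree_div Fq h0 f.denom_ne_zero]
    have hlt : (f.num %ₘ f.denom).natDegree < f.denom.natDegree := by
      have h1 : (f.num %ₘ f.denom).degree < f.denom.degree :=
        Polynomial.degree_modByMonic_lt f.num f.monic_denom
      rwa [Polynomial.degree_eq_natDegree f.denom_ne_zero,
        ← Polynomial.natDegree_lt_iff_degree_lt h0] at h1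
    omega

lemma exists_approx (α : RatFunc.CompletionAtInfty Fq) (m : ℕ) :
    ∃ B A : Polynomial Fq, A.degree < (m : ℕ) ∧
      Valued.v (α - embP Fq B -
          embR Fq (algebraMap (Polynomial Fq) (RatFunc Fq) A /
            algebraMap (Polynomial Fq) (RatFunc Fq) (Polynomial.X ^ m))) ≤
        ((ofAdd (-1 - (m : ℤ)) : Multiplicative ℤ) : ℤᵐ⁰) := by
  obtain ⟨f, hf⟩ := exists_close Fq α (-1 - (m : ℤ))
  set xm : RatFunc Fq := algebraMap (Polynomial Fq) (RatFunc Fq) (Polynomial.X ^ m) with hxmdef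
  have hXm : (Polynomial.X ^ m : Polynomial Fq) ≠ 0 := pow_ne_zero _ Polynomial.X_ne_zero
  have hxm : xm ≠ 0 := RatFunc.algebraMap_ne_zero hXm
  obtain ⟨P, hP⟩ := exists_polyPart Fq (f * xm)
  refine ⟨P /ₘ (Polynomial.X ^ m), P %ₘ (Polynomial.X ^ m), ?_, ?_⟩
  · refine lt_of_lt_of_le (Polynomial.degree_modByMonic_lt P (Polynomial.monic_X_pow m)) ?_
    rw [Polynomial.degree_X_pow]
  · set B : Polynomial Fq := P /ₘ (Polynomial.X ^ m)
    set A : Polynomial Fq := P %ₘ (Polynomial.X ^ m)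
    have hPid : algebraMap (Polynomial Fq) (RatFunc Fq) A + xm *
        algebraMap (Polynomial Fq) (RatFunc Fq) B = algebraMap (Polynomial Fq) (RatFunc Fq) P := by
      rw [hxmdef, ← map_mul, ← map_add]
      exact congrArg _ (Polynomial.modByMonic_add_div P (Polynomial.X ^ m))
    have hrat : f - algebraMap (Polynomial Fq) (RatFunc Fq) B -
        algebraMap (Polynomial Fq) (RatFunc Fq) A / xm =
        (f * xm - algebraMap (Polynomial Fq) (RatFunc Fq) P) / xm := by
      field_simp
      linear_combination -hPid
    have hsplit : α - embP Fq B - embR Fq (algebraMap (Polynomial Fq) (RatFunc Fq) A / xm) =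
        (α - embR Fq f) + embR Fq ((f * xm - algebraMap (Polynomial Fq) (RatFunc Fq) P) / xm) := by
      rw [← hrat]
      simp only [embP, RingHom.comp_apply, map_sub]
      ring
    rw [hsplit]
    apply Valuation.map_add_le _ hf
    rw [v_embR]
    have hdiv : RatFunc.inftyValuationDef Fq ((f * xm - algebraMap (Polynomial Fq) (RatFunc Fq) P) / xm)
        = RatFunc.inftyValuationDef Fq (f * xm - algebraMap (Polynomial Fq) (RatFunc Fq) P) /
          RatFunc.inftyValuationDef Fq xm := by
      rw [← RatFunc.inftyValuation_apply, ← RatFunc.inftyValuation_apply, ← RatFunc.inftyValuation_apply]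
      exact map_div₀ (RatFunc.inftyValuation Fq) _ _
    rw [hdiv]
    have hvxm : RatFunc.inftyValuationDef Fq xm = ((ofAdd (m : ℤ) : Multiplicative ℤ) : ℤᵐ⁰) := by
      rw [hxmdef, RatFunc.inftyValuation.polynomial Fq hXm, Polynomial.natDegree_X_pow, WithZero.exp_eq_coe_ofAdd]
    rw [hvxm]
    calc RatFunc.inftyValuationDef Fq (f * xm - algebraMap (Polynomial Fq) (RatFunc Fq) P) /
          ((ofAdd (m : ℤ) : Multiplicative ℤ) : ℤᵐ⁰)
        ≤ ((ofAdd (-1 : ℤ) : Multiplicative ℤ) : ℤᵐ⁰) /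
          ((ofAdd (m : ℤ) : Multiplicative ℤ) : ℤᵐ⁰) := by
          rw [div_eq_mul_inv, div_eq_mul_inv]
          exact mul_le_mul_left hP _
      _ = ((ofAdd (-1 - (m : ℤ)) : Multiplicative ℤ) : ℤᵐ⁰) := by
          rw [← WithZero.coe_div, ← ofAdd_sub]

lemma natDegree_le_of_mem_degreeLT {p : Polynomial Fq} {k : ℕ}
    (h : p ∈ Polynomial.degreeLT Fq (k + 1)) : p.natDegree ≤ k := by
  rcases eq_or_ne p 0 with rfl | hp
  · simp
  · rw [Polynomial.mem_degreeLT] at h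
    have := (Polynomial.natDegree_lt_iff_degree_lt hp).2 h
    omega

lemma exists_sol (n : ℕ) (θ : Fin n → RatFunc.CompletionAtInfty Fq) (m : ℕ) :
    ∃ y : Polynomial Fq, y ≠ 0 ∧ y.natDegree ≤ m * n ∧
      ∀ i, ∃ C : Polynomial Fq,
        Valued.v (embP Fq y * θ i - embP Fq C) ≤
          ((ofAdd (-1 - (m : ℤ)) : Multiplicative ℤ) : ℤᵐ⁰) := by
  classical
  letI : Fintype (Polynomial.degreeLT Fq (m * n + 1)) :=
    Fintype.ofEquiv _ (Polynomial.degreeLTEquiv Fq (m * n + 1)).toEquiv.symm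
  letI : Fintype (Polynomial.degreeLT Fq m) :=
    Fintype.ofEquiv _ (Polynomial.degreeLTEquiv Fq m).toEquiv.symm
  set q : ℕ := Fintype.card Fq with hq
  have hcard1 : Fintype.card (Polynomial.degreeLT Fq (m * n + 1)) = q ^ (m * n + 1) := by
    rw [Fintype.card_congr (Polynomial.degreeLTEquiv Fq (m * n + 1)).toEquiv]
    simp [Fintype.card_fun, hq]
  have hcard2 : Fintype.card (Fin n → Polynomial.degreeLT Fq m) = q ^ (m * n) := by
    rw [Fintype.card_fun]
    rw [Fintype.card_congr (Polynomial.degreeLTEquiv Fq m).toEquiv]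
    simp [Fintype.card_fun, ← pow_mul, hq]
  have hlt : Fintype.card (Fin n → Polynomial.degreeLT Fq m) <
      Fintype.card (Polynomial.degreeLT Fq (m * n + 1)) := by
    rw [hcard1, hcard2]
    exact Nat.pow_lt_pow_right Fintype.one_lt_card (by omega)
  have hFspec : ∀ (p : Polynomial Fq) (i : Fin n),
      ((exists_approx Fq (embP Fq p * θ i) m).choose_spec.choose.degree < (m : ℕ) ∧
        Valued.v (embP Fq p * θ i - embP Fq (exists_approx Fq (embP Fq p * θ i) m).choose -
          embR Fq (algebraMap (Polynomial Fq) (RatFunc Fq)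
              (exists_approx Fq (embP Fq p * θ i) m).choose_spec.choose /
            algebraMap (Polynomial Fq) (RatFunc Fq) (Polynomial.X ^ m))) ≤
          ((ofAdd (-1 - (m : ℤ)) : Multiplicative ℤ) : ℤᵐ⁰)) :=
    fun p i => (exists_approx Fq (embP Fq p * θ i) m).choose_spec.choose_spec
  set Φ : Polynomial.degreeLT Fq (m * n + 1) → (Fin n → Polynomial.degreeLT Fq m) :=
    fun x i => ⟨(exists_approx Fq (embP Fq x.1 * θ i) m).choose_spec.choose,
      Polynomial.mem_degreeLT.2 (hFspec x.1 i).1⟩ with hΦ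
  obtain ⟨x, x', hne, heq⟩ := Fintype.exists_ne_map_eq_of_card_lt Φ hlt
  refine ⟨x.1 - x'.1, sub_ne_zero.2 fun h => hne (Subtype.ext h), ?_, ?_⟩
  · exact le_trans (Polynomial.natDegree_sub_le _ _)
      (max_le (natDegree_le_of_mem_degreeLT Fq x.2) (natDegree_le_of_mem_degreeLT Fq x'.2))
  · intro i
    have hA : (exists_approx Fq (embP Fq x.1 * θ i) m).choose_spec.choose =
        (exists_approx Fq (embP Fq x'.1 * θ i) m).choose_spec.choose :=
      congrArg Subtype.val (congrFun heq i)
    refine ⟨(exists_approx Fq (embP Fq x.1 * θ i) m).choose -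
      (exists_approx Fq (embP Fq x'.1 * θ i) m).choose, ?_⟩
    have hid : embP Fq (x.1 - x'.1) * θ i -
        embP Fq ((exists_approx Fq (embP Fq x.1 * θ i) m).choose -
          (exists_approx Fq (embP Fq x'.1 * θ i) m).choose) =
        (embP Fq x.1 * θ i - embP Fq (exists_approx Fq (embP Fq x.1 * θ i) m).choose -
          embR Fq (algebraMap (Polynomial Fq) (RatFunc Fq)
              (exists_approx Fq (embP Fq x.1 * θ i) m).choose_spec.choose /
            algebraMap (Polynomial Fq) (RatFunc Fq) (Polynomial.X ^ m))) -
        (embP Fq x'.1 * θ i - embP Fq (exists_approx Fq (embP Fq x'.1 * θ i) m).choose -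
          embR Fq (algebraMap (Polynomial Fq) (RatFunc Fq)
              (exists_approx Fq (embP Fq x'.1 * θ i) m).choose_spec.choose /
            algebraMap (Polynomial Fq) (RatFunc Fq) (Polynomial.X ^ m))) := by
      rw [← hA]
      simp only [map_sub]
      ring
    rw [hid]
    exact Valuation.map_sub_le _ (hFspec x.1 i).2 (hFspec x'.1 i).2

lemma exists_near (α : RatFunc.CompletionAtInfty Fq) :
    ∃ B : Polynomial Fq,
      Valued.v (α - embP Fq B) ≤ ((ofAdd (-1 : ℤ) : Multiplicative ℤ) : ℤᵐ⁰) := by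
  obtain ⟨B, A, hdeg, hv⟩ := exists_approx Fq α 0
  refine ⟨B, ?_⟩
  have hA : A = 0 := by
    rw [Nat.cast_zero, Nat.WithBot.lt_zero_iff, Polynomial.degree_eq_bot] at hdeg
    exact hdeg
  rw [hA] at hv
  simp only [map_zero, zero_div, sub_zero] at hv
  simpa using hv

lemma pnorm_pos (α : RatFunc.CompletionAtInfty Fq) (h : ∀ C : Polynomial Fq, α ≠ embP Fq C) :
    0 < pnorm Fq α := by
  obtain ⟨B, hB⟩ := exists_near Fq α
  have hlb : ∀ C : Polynomial Fq, Valued.v (α - embP Fq B) ≤ Valued.v (α - embP Fq C) := by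
    intro C
    rcases eq_or_ne C B with rfl | hCB
    · exact le_refl _
    · by_contra hlt
      push_neg at hlt
      have hid : embP Fq (B - C) = (α - embP Fq C) - (α - embP Fq B) := by
        rw [map_sub]; ring
      have h1 : Valued.v (embP Fq (B - C)) ≤ Valued.v (α - embP Fq B) := by
        rw [hid]
        exact le_trans (Valuation.map_sub _ _ _) (max_le hlt.le (le_refl _))
      have h2 : (1 : ℤᵐ⁰) ≤ Valued.v (embP Fq (B - C)) := by
        have hBC : B - C ≠ 0 := sub_ne_zero.2 fun hbc => hCB hbc.symm
        have : Valued.v (embP Fq (B - C)) =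
            ((ofAdd ((B - C).natDegree : ℤ) : Multiplicative ℤ) : ℤᵐ⁰) := by
          rw [show embP Fq (B - C) = embR Fq (algebraMap (Polynomial Fq) (RatFunc Fq) (B - C))
            from rfl, v_embR, RatFunc.inftyValuation.polynomial Fq hBC, WithZero.exp_eq_coe_ofAdd]
        rw [this, ← WithZero.coe_one, WithZero.coe_le_coe, ← ofAdd_zero,
          Multiplicative.ofAdd_le]
        positivity
      have h3 : (1 : ℤᵐ⁰) ≤ ((ofAdd (-1 : ℤ) : Multiplicative ℤ) : ℤᵐ⁰) :=
        le_trans h2 (le_trans h1 hB)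
      rw [← WithZero.coe_one, WithZero.coe_le_coe, ← ofAdd_zero, Multiplicative.ofAdd_le] at h3
      omega
  have hne : α - embP Fq B ≠ 0 := sub_ne_zero.2 (h B)
  refine lt_of_lt_of_le (vabs_pos Fq hne) (le_ciInf fun C => vabs_mono Fq (hlb C))

theorem stmt9 (n : ℕ) (hn : 0 < n) (θ : Fin n → RatFunc.CompletionAtInfty Fq)
    (hθ : ∃ i, ∀ f : RatFunc Fq, θ i ≠ embR Fq f) :
    {x : Polynomial Fq |
      (vabs Fq (embP Fq x)) ^ ((1 : ℝ) / n) * (⨆ i, pnorm Fq (embP Fq x * θ i)) ≤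
        (Fintype.card Fq : ℝ)⁻¹}.Infinite := by
  classical
  obtain ⟨i₀, hi₀⟩ := hθ
  haveI : Nonempty (Fin n) := Fin.pos_iff_nonempty.1 hn
  have hq1 : 1 < (Fintype.card Fq : ℝ) := one_lt_q Fq
  have hq0 : 0 < (Fintype.card Fq : ℝ) := lt_trans one_pos hq1
  have hpos : ∀ y : Polynomial Fq, y ≠ 0 → 0 < pnorm Fq (embP Fq y * θ i₀) := by
    intro y hy
    apply pnorm_pos
    intro C hC
    have hy' : embP Fq y ≠ 0 :=
      (map_ne_zero_iff (embR Fq) (embR Fq).injective).2 (RatFunc.algebraMap_ne_zero hy)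
    apply hi₀ (algebraMap (Polynomial Fq) (RatFunc Fq) C /
      algebraMap (Polynomial Fq) (RatFunc Fq) y)
    rw [map_div₀]
    rw [show embR Fq (algebraMap (Polynomial Fq) (RatFunc Fq) C) = embP Fq C from rfl,
      show embR Fq (algebraMap (Polynomial Fq) (RatFunc Fq) y) = embP Fq y from rfl]
    rw [eq_div_iff hy', mul_comm]
    exact hC
  have key : ∀ m : ℕ, ∃ y : Polynomial Fq, y ≠ 0 ∧
      (vabs Fq (embP Fq y)) ^ ((1 : ℝ) / n) * (⨆ i, pnorm Fq (embP Fq y * θ i)) ≤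
        (Fintype.card Fq : ℝ)⁻¹ ∧
      pnorm Fq (embP Fq y * θ i₀) ≤ (Fintype.card Fq : ℝ) ^ (-1 - (m : ℤ)) := by
    intro m
    obtain ⟨y, hy0, hydeg, hyC⟩ := exists_sol Fq n θ m
    have hsup : (⨆ i, pnorm Fq (embP Fq y * θ i)) ≤ (Fintype.card Fq : ℝ) ^ (-1 - (m : ℤ)) := by
      refine ciSup_le fun i => ?_
      obtain ⟨C, hC⟩ := hyC i
      exact le_trans (pnorm_le Fq _ C) (vabs_le_of_le Fq hC)
    have hvy : vabs Fq (embP Fq y) ≤ (Fintype.card Fq : ℝ) ^ ((m * n : ℕ) : ℤ) := by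
      apply vabs_le_of_le
      rw [show embP Fq y = embR Fq (algebraMap (Polynomial Fq) (RatFunc Fq) y) from rfl, v_embR,
        RatFunc.inftyValuation.polynomial Fq hy0, WithZero.exp_eq_coe_ofAdd, WithZero.coe_le_coe, Multiplicative.ofAdd_le]
      exact_mod_cast hydeg
    have h1 : vabs Fq (embP Fq y) ^ ((1 : ℝ) / n) ≤ (Fintype.card Fq : ℝ) ^ (m : ℤ) := by
      have h2 := Real.rpow_le_rpow (vabs_nonneg Fq _) hvy (by positivity : (0:ℝ) ≤ 1 / n)
      refine h2.trans_eq ?_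
      rw [zpow_natCast, pow_mul, one_div, Real.pow_rpow_inv_natCast (by positivity) hn.ne',
        zpow_natCast]
    refine ⟨y, hy0, ?_, le_trans (le_ciSup (f := fun i => pnorm Fq (embP Fq y * θ i))
      (Set.Finite.bddAbove (Set.finite_range _)) i₀) hsup⟩
    calc (vabs Fq (embP Fq y)) ^ ((1 : ℝ) / n) * (⨆ i, pnorm Fq (embP Fq y * θ i))
        ≤ (Fintype.card Fq : ℝ) ^ (m : ℤ) * (Fintype.card Fq : ℝ) ^ (-1 - (m : ℤ)) :=
          mul_le_mul h1 hsup (Real.iSup_nonneg fun i => pnorm_nonneg Fq _) (by positivity)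
      _ = (Fintype.card Fq : ℝ)⁻¹ := by
          rw [← zpow_add₀ (ne_of_gt hq0), show (m : ℤ) + (-1 - (m : ℤ)) = -1 by ring,
            zpow_neg_one]
  by_contra hfin
  rw [Set.not_infinite] at hfin
  set T := hfin.toFinset.erase 0 with hT
  have hmemT : ∀ m : ℕ, ∃ y ∈ T,
      pnorm Fq (embP Fq y * θ i₀) ≤ (Fintype.card Fq : ℝ) ^ (-1 - (m : ℤ)) := by
    intro m
    obtain ⟨y, hy0, hmem, hp⟩ := key m
    exact ⟨y, Finset.mem_erase.2 ⟨hy0, hfin.mem_toFinset.2 hmem⟩, hp⟩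
  obtain ⟨y₀, hy₀T, _⟩ := hmemT 0
  have hTne : T.Nonempty := ⟨y₀, hy₀T⟩
  set c := T.inf' hTne (fun y => pnorm Fq (embP Fq y * θ i₀)) with hc
  have hcpos : 0 < c := by
    rw [hc, Finset.lt_inf'_iff]
    intro y hy
    exact hpos y (Finset.mem_erase.1 hy).1
  obtain ⟨N, hN⟩ := exists_pow_lt_of_lt_one hcpos (by
    rw [inv_lt_one_iff₀]
    right
    exact hq1)
  obtain ⟨y, hyT, hyle⟩ := hmemT N
  have hle2 : (Fintype.card Fq : ℝ) ^ (-1 - (N : ℤ)) < c := by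
    have e : (Fintype.card Fq : ℝ) ^ (-1 - (N : ℤ)) = ((Fintype.card Fq : ℝ)⁻¹) ^ (N + 1) := by
      rw [show (-1 - (N : ℤ)) = -((N + 1 : ℕ) : ℤ) by push_cast; ring, zpow_neg, zpow_natCast,
        ← inv_pow]
    calc (Fintype.card Fq : ℝ) ^ (-1 - (N : ℤ)) = ((Fintype.card Fq : ℝ)⁻¹) ^ (N + 1) := e
      _ ≤ ((Fintype.card Fq : ℝ)⁻¹) ^ N := by
          apply pow_le_pow_of_le_one (by positivity) ?_ (Nat.le_succ N)
          rw [inv_le_one_iff₀]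
          right
          exact hq1.le
      _ < c := hN
  exact absurd (Finset.inf'_le _ hyT) (not_le.2 (lt_of_le_of_lt hyle hle2))
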